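/- Let S be the recoverable set R^{π_b}(T_B; S₀), assume S is forward invariant under the Backup-CBF closed-loop dynamics f_BCBF, assume S₀ ⊆ C, assume T_H > 0, and assume that f_BCBF(x) = f_nom(x) for every x in the Backup-CBF inactive set I_BCBF. Then the relative interior of I_BCBF in S is contained in the gatekeeper inactive set: int_S(I_BCBF) ⊆ I_GK. That is, for every x ∈ S such that some open ball B_ε(x) satisfies B_ε(x) ∩ S ⊆ I_BCBF, there exists T_S with 0 < T_S ≤ T_H such that Valid(x; T_S) holds. -/

import Mathlib

/-- `φ` is a trajectory of the vector field `f` from initial state `x`: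
`φ 0 = x` and `φ` solves `φ' τ = f (φ τ)` for all `τ`. -/
def IsTrajectory {n : ℕ}
    (f : EuclideanSpace ℝ (Fin n) → EuclideanSpace ℝ (Fin n))
    (x : EuclideanSpace ℝ (Fin n)) (φ : ℝ → EuclideanSpace ℝ (Fin n)) : Prop :=
  φ 0 = x ∧ ∀ τ : ℝ, HasDerivAt φ (f (φ τ)) τ

/-- The recoverable set `R^{π_b}(T_B; S₀)`: states from which the backup
trajectory stays in `C` on `[0, T_B]` and reaches `S₀` at time `T_B`. -/
def Recoverable {n : ℕ} (C S₀ : Set (EuclideanSpace ℝ (Fin n))) (T_B : ℝ)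
    (φb : EuclideanSpace ℝ (Fin n) → ℝ → EuclideanSpace ℝ (Fin n)) :
    Set (EuclideanSpace ℝ (Fin n)) :=
  {x | (∀ τ ∈ Set.Icc (0 : ℝ) T_B, φb x τ ∈ C) ∧ φb x T_B ∈ S₀}

/-- Validity indicator: the nominal trajectory from `x` stays in `C` on `[0, T_S]`,
and from the switch state `φnom x T_S` the backup trajectory stays in `C` on
`[0, T_B]` and reaches `S₀` at time `T_B`. -/
def Valid {n : ℕ} (C S₀ : Set (EuclideanSpace ℝ (Fin n))) (T_B : ℝ)
    (φnom φb : EuclideanSpace ℝ (Fin n) → ℝ → EuclideanSpace ℝ (Fin n))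
    (x : EuclideanSpace ℝ (Fin n)) (T_S : ℝ) : Prop :=
  (∀ τ ∈ Set.Icc (0 : ℝ) T_S, φnom x τ ∈ C) ∧
  (∀ τ ∈ Set.Icc (0 : ℝ) T_B, φb (φnom x T_S) τ ∈ C) ∧
  φb (φnom x T_S) T_B ∈ S₀

/-- **Theorem (relative interior of the Backup-CBF inactive set is contained in
the gatekeeper inactive set).** Let `S = R^{π_b}(T_B; S₀)` be forward invariant
under the Backup-CBF closed-loop dynamics, let `S₀ ⊆ C`, `T_H > 0`, and let the
Backup-CBF vector field coincide with the nominal one on the inactive set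
`I_BCBF`. Then every `x ∈ S` admitting a ball `B_ε(x)` with
`B_ε(x) ∩ S ⊆ I_BCBF` satisfies `Valid(x; T_S)` for some `T_S ∈ (0, T_H]`. -/
theorem interior_bcbf_subset_gatekeeper {n : ℕ}
    (f_nom f_b f_BCBF : EuclideanSpace ℝ (Fin n) → EuclideanSpace ℝ (Fin n))
    (hf_nom : LocallyLipschitz f_nom) (hf_b : LocallyLipschitz f_b)
    (hf_BCBF : LocallyLipschitz f_BCBF)
    (φnom φb φBCBF : EuclideanSpace ℝ (Fin n) → ℝ → EuclideanSpace ℝ (Fin n))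
    (hφnom : ∀ x, IsTrajectory f_nom x (φnom x))
    (hφb : ∀ x, IsTrajectory f_b x (φb x))
    (hφBCBF : ∀ x, IsTrajectory f_BCBF x (φBCBF x))
    (C S₀ : Set (EuclideanSpace ℝ (Fin n))) (hS₀C : S₀ ⊆ C)
    (T_B : ℝ) (hT_B : 0 < T_B)
    (T_H : ℝ) (hT_H : 0 < T_H)
    (I_BCBF : Set (EuclideanSpace ℝ (Fin n)))
    (hAgree : ∀ z ∈ I_BCBF, f_BCBF z = f_nom z)
    (hInv : ∀ x ∈ Recoverable C S₀ T_B φb, ∀ τ : ℝ, 0 ≤ τ →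
      φBCBF x τ ∈ Recoverable C S₀ T_B φb)
    (x : EuclideanSpace ℝ (Fin n)) (hxS : x ∈ Recoverable C S₀ T_B φb)
    (hxInt : ∃ ε > (0 : ℝ), Metric.ball x ε ∩ Recoverable C S₀ T_B φb ⊆ I_BCBF) :
    ∃ T_S : ℝ, 0 < T_S ∧ T_S ≤ T_H ∧ Valid C S₀ T_B φnom φb x T_S := by
  classical
  obtain ⟨ε, hε, hball⟩ := hxInt
  -- S ⊆ C
  have hSC : Recoverable C S₀ T_B φb ⊆ C := by
    intro z hz
    have h0 : φb z 0 ∈ C := hz.1 0 ⟨le_refl 0, hT_B.le⟩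
    rwa [(hφb z).1] at h0
  -- local Lipschitz data for f_nom near x
  obtain ⟨K, t, ht, hK⟩ := hf_nom x
  obtain ⟨r, hr, hrt⟩ := Metric.mem_nhds_iff.mp ht
  set ρ := min ε r with hρdef
  have hρ : 0 < ρ := lt_min hε hr
  have hKρ : LipschitzOnWith K f_nom (Metric.ball x ρ) :=
    hK.mono ((Metric.ball_subset_ball (min_le_right ε r)).trans hrt)
  -- continuity of both trajectories at 0
  have hcnom : ContinuousAt (φnom x) 0 := ((hφnom x).2 0).continuousAt
  have hcB : ContinuousAt (φBCBF x) 0 := ((hφBCBF x).2 0).continuousAt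
  rw [Metric.continuousAt_iff] at hcnom hcB
  obtain ⟨δ₁, hδ₁, h1⟩ := hcnom ρ hρ
  obtain ⟨δ₂, hδ₂, h2⟩ := hcB ρ hρ
  set T_S := min (min δ₁ δ₂ / 2) T_H with hTdef
  have hT0 : 0 < T_S := lt_min (by positivity) hT_H
  have hmin : 0 < min δ₁ δ₂ := lt_min hδ₁ hδ₂
  have hhalf : min δ₁ δ₂ / 2 < min δ₁ δ₂ := half_lt_self hmin
  have hT1 : T_S < δ₁ := (min_le_left _ _).trans_lt (hhalf.trans_le (min_le_left _ _))
  have hT2 : T_S < δ₂ := (min_le_left _ _).trans_lt (hhalf.trans_le (min_le_right _ _))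
  -- membership of trajectories in the ball on [0, T_S]
  have hnom_mem : ∀ τ ∈ Set.Icc (0:ℝ) T_S, φnom x τ ∈ Metric.ball x ρ := by
    intro τ hτ
    have hd : dist τ 0 < δ₁ := by
      rw [Real.dist_eq, sub_zero, abs_of_nonneg hτ.1]
      exact lt_of_le_of_lt hτ.2 hT1
    have := h1 hd
    rwa [(hφnom x).1] at this
  have hB_mem : ∀ τ ∈ Set.Icc (0:ℝ) T_S, φBCBF x τ ∈ Metric.ball x ρ := by
    intro τ hτ
    have hd : dist τ 0 < δ₂ := by
      rw [Real.dist_eq, sub_zero, abs_of_nonneg hτ.1]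
      exact lt_of_le_of_lt hτ.2 hT2
    have := h2 hd
    rwa [(hφBCBF x).1] at this
  have hB_S : ∀ τ ∈ Set.Icc (0:ℝ) T_S, φBCBF x τ ∈ Recoverable C S₀ T_B φb :=
    fun τ hτ => hInv x hxS τ hτ.1
  have hB_I : ∀ τ ∈ Set.Icc (0:ℝ) T_S, φBCBF x τ ∈ I_BCBF := by
    intro τ hτ
    refine hball ⟨?_, hB_S τ hτ⟩
    exact Metric.ball_subset_ball (min_le_left ε r) (hB_mem τ hτ)
  -- uniqueness: φnom x = φBCBF x on [0, T_S]
  have heq : Set.EqOn (φnom x) (φBCBF x) (Set.Icc 0 T_S) := by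
    apply ODE_solution_unique_of_mem_Icc_right
      (v := fun _ : ℝ => f_nom) (s := fun _ : ℝ => Metric.ball x ρ)
      (K := K) (fun _ _ => hKρ)
    · exact (Continuous.continuousOn (continuous_iff_continuousAt.mpr
        fun τ => ((hφnom x).2 τ).continuousAt))
    · exact fun τ _ => ((hφnom x).2 τ).hasDerivWithinAt
    · exact fun τ hτ => hnom_mem τ (Set.mem_Icc_of_Ico hτ)
    · exact (Continuous.continuousOn (continuous_iff_continuousAt.mpr
        fun τ => ((hφBCBF x).2 τ).continuousAt))
    · intro τ hτ
      have h := ((hφBCBF x).2 τ).hasDerivWithinAt (s := Set.Ici τ)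
      rwa [hAgree _ (hB_I τ (Set.mem_Icc_of_Ico hτ))] at h
    · exact fun τ hτ => hB_mem τ (Set.mem_Icc_of_Ico hτ)
    · rw [(hφnom x).1, (hφBCBF x).1]
  refine ⟨T_S, hT0, min_le_right _ _, ?_, ?_, ?_⟩
  · intro τ hτ
    rw [heq hτ]
    exact hSC (hB_S τ hτ)
  · have hS := hB_S T_S ⟨hT0.le, le_refl _⟩
    rw [heq ⟨hT0.le, le_refl _⟩]
    exact hS.1
  · have hS := hB_S T_S ⟨hT0.le, le_refl _⟩
    rw [heq ⟨hT0.le, le_refl _⟩]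
    exact hS.2
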